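/- Under the uniform bound ∫_{t_p}^{t_{p+1}} Σ_{j≠k} a_{kj}(t) dt ≤ nM, the diagonal entries of the sampled transition matrix satisfy φ_{kk}(p) ≥ e^{−nM} for every agent k and every p. -/

import Mathlib

open intervalIntegral

open MeasureTheory Set Finset in
/-- A partition of `[a,b]` into `N+1` pieces, each of `β`-mass at most `K/N`. -/
lemma consensus_partition_exists (β : ℝ → ℝ) (a b : ℝ) (hab : a ≤ b)
    (hβ0 : ∀ t, 0 ≤ β t) (hβi : IntervalIntegrable β volume a b) (N : ℕ) (hN : 0 < N) :
    ∃ s : ℕ → ℝ, s 0 = a ∧ s (N + 1) = b ∧ (∀ m, m ≤ N → s m ≤ s (m + 1)) ∧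
      (∀ m, m ≤ N + 1 → s m ∈ Set.Icc a b) ∧
      (∀ m, m ≤ N → (∫ r in s m..s (m + 1), β r) ≤ (∫ r in a..b, β r) / N) ∧
      (∑ l ∈ Finset.range (N + 1), ∫ r in s l..s (l + 1), β r) = ∫ r in a..b, β r := by
  set K := ∫ r in a..b, β r with hK
  have hK0 : 0 ≤ K := intervalIntegral.integral_nonneg hab (fun t _ => hβ0 t)
  have hKN : 0 ≤ K / N := by positivity
  set c : ℝ → ℝ := fun τ => max a (min τ b) with hc
  have hcmem : ∀ τ, c τ ∈ Set.Icc a b :=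
    fun τ => ⟨le_max_left _ _, max_le hab (min_le_right _ _)⟩
  have hcid : ∀ τ ∈ Set.Icc a b, c τ = τ := by
    intro τ hτ
    simp only [c]
    rw [min_eq_left hτ.2, max_eq_right hτ.1]
  set B : ℝ → ℝ := fun τ => ∫ r in a..(c τ), β r with hB
  have hBcont : Continuous B := by
    have h1 : ContinuousOn (fun t => ∫ r in a..t, β r) (Set.uIcc a b) :=
      intervalIntegral.continuousOn_primitive_interval' hβi Set.left_mem_uIcc
    have h2' : Continuous c := continuous_const.max (continuous_id.min continuous_const)
    exact h1.comp_continuous h2' (fun τ => by rw [Set.uIcc_of_le hab]; exact hcmem τ)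
  have hBval : ∀ τ ∈ Set.Icc a b, B τ = ∫ r in a..τ, β r := by
    intro τ hτ
    simp only [hB]
    rw [hcid τ hτ]
  have hsub : ∀ u v : ℝ, u ∈ Set.Icc a b → v ∈ Set.Icc a b → u ≤ v →
      IntervalIntegrable β MeasureTheory.volume u v := by
    intro u v hu hv huv
    refine hβi.mono_set ?_
    rw [Set.uIcc_of_le hab, Set.uIcc_of_le huv]
    exact Set.Icc_subset_Icc hu.1 hv.2
  have hBdiff : ∀ u v : ℝ, u ∈ Set.Icc a b → v ∈ Set.Icc a b → u ≤ v →
      B v - B u = ∫ r in u..v, β r := by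
    intro u v hu hv huv
    rw [hBval u hu, hBval v hv]
    have h1 : IntervalIntegrable β MeasureTheory.volume a u :=
      hsub a u ⟨le_rfl, hab⟩ hu hu.1
    have h2 : IntervalIntegrable β MeasureTheory.volume u v := hsub u v hu hv huv
    have := intervalIntegral.integral_add_adjacent_intervals h1 h2
    linarith
  have hBa : B a = 0 := by
    rw [hBval a ⟨le_rfl, hab⟩, intervalIntegral.integral_same]
  have hBb : B b = K := hBval b ⟨hab, le_rfl⟩
  set S : ℕ → Set ℝ := fun m => {τ | τ ∈ Set.Icc a b ∧ B τ ≤ m * (K / N)} with hS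
  have hSa : ∀ m, a ∈ S m := by
    intro m
    refine ⟨⟨le_rfl, hab⟩, ?_⟩
    rw [hBa]; positivity
  have hScl : ∀ m : ℕ, IsClosed (S m) := by
    intro m
    have : S m = Set.Icc a b ∩ B ⁻¹' (Set.Iic (m * (K / N))) := rfl
    rw [this]
    exact isClosed_Icc.inter (isClosed_Iic.preimage hBcont)
  have hScpt : ∀ m : ℕ, IsCompact (S m) :=
    fun m => isCompact_Icc.of_isClosed_subset (hScl m) (fun τ hτ => hτ.1)
  set s : ℕ → ℝ := fun m => if m = 0 then a else sSup (S m) with hs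
  have hmemS : ∀ m : ℕ, m ≠ 0 → s m ∈ S m := by
    intro m hm
    simp only [hs, if_neg hm]
    exact (hScpt m).sSup_mem ⟨a, hSa m⟩
  have hmem : ∀ m : ℕ, s m ∈ Set.Icc a b := by
    intro m
    by_cases hm : m = 0
    · simp only [hs, if_pos hm]; exact ⟨le_rfl, hab⟩
    · exact (hmemS m hm).1
  have hmono : ∀ m : ℕ, s m ≤ s (m + 1) := by
    intro m
    by_cases hm : m = 0
    · simp only [hs, if_pos hm, if_neg (Nat.succ_ne_zero m)]
      exact le_csSup (hScpt (m+1)).bddAbove (hSa (m+1))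
    · simp only [hs, if_neg hm, if_neg (Nat.succ_ne_zero m)]
      refine csSup_le_csSup (hScpt (m+1)).bddAbove ⟨a, hSa m⟩ ?_
      intro τ hτ
      refine ⟨hτ.1, hτ.2.trans ?_⟩
      have : (m : ℝ) ≤ (m : ℝ) + 1 := by linarith
      push_cast
      nlinarith
  have hBlow : ∀ m : ℕ, m ≠ 0 → (m * (K / N) ≤ B (s m) ∨ s m = b) := by
    intro m hm
    by_contra hcon
    push_neg at hcon
    obtain ⟨h1, h2⟩ := hcon
    have hlt : s m < b := lt_of_le_of_ne (hmem m).2 h2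
    have hO : IsOpen (B ⁻¹' Set.Iio (m * (K / N))) := isOpen_Iio.preimage hBcont
    obtain ⟨ε, hε, hball⟩ := Metric.isOpen_iff.1 hO (s m) h1
    set τ' := min b (s m + ε / 2) with hτ'
    have hτgt : s m < τ' := lt_min hlt (by linarith)
    have hτb : τ' ∈ Set.Icc a b := ⟨le_trans (hmem m).1 hτgt.le, min_le_left _ _⟩
    have hτball : τ' ∈ Metric.ball (s m) ε := by
      rw [Metric.mem_ball, Real.dist_eq, abs_of_pos (by linarith : (0:ℝ) < τ' - s m)]
      have : τ' ≤ s m + ε / 2 := min_le_right _ _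
      linarith
    have hτS : τ' ∈ S m := ⟨hτb, (hball hτball).le⟩
    have : τ' ≤ s m := by
      have := le_csSup (hScpt m).bddAbove hτS
      simpa [hs, if_neg hm] using this
    linarith
  have hmassB : ∀ m : ℕ, (∫ r in s m..s (m + 1), β r) = B (s (m+1)) - B (s m) := by
    intro m
    rw [hBdiff (s m) (s (m+1)) (hmem m) (hmem (m+1)) (hmono m)]
  have hmass : ∀ m : ℕ, m ≤ N → (∫ r in s m..s (m + 1), β r) ≤ K / N := by
    intro m _
    rw [hmassB m]
    have hup : B (s (m+1)) ≤ (m + 1) * (K / N) := by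
      have := (hmemS (m+1) (Nat.succ_ne_zero m)).2
      push_cast at this ⊢
      linarith
    by_cases hm : m = 0
    · subst hm
      have hs0 : s 0 = a := by simp [hs]
      rw [hs0, hBa]
      push_cast at hup
      linarith
    · rcases hBlow m hm with h | h
      · push_cast at hup h ⊢
        linarith
      · have hsm1 : s (m+1) = b := le_antisymm (hmem (m+1)).2 (h ▸ hmono m)
        rw [h, hsm1]
        simp [hKN]
  have hsN1 : s (N + 1) = b := by
    have hm : (N:ℕ) + 1 ≠ 0 := Nat.succ_ne_zero N
    have h1 : s (N+1) ≤ b := (hmem (N+1)).2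
    have h2 : b ≤ s (N+1) := by
      simp only [hs, if_neg hm]
      refine le_csSup (hScpt (N+1)).bddAbove ⟨⟨hab, le_rfl⟩, ?_⟩
      rw [hBb]
      have hNR : (0:ℝ) < (N:ℝ) := by exact_mod_cast hN
      have hNK : (N:ℝ) * (K / N) = K := by field_simp
      push_cast
      nlinarith [hKN]
    linarith
  refine ⟨s, by simp [hs], hsN1, fun m _ => hmono m, fun m _ => hmem m, hmass, ?_⟩
  have : (∑ l ∈ Finset.range (N + 1), ∫ r in s l..s (l + 1), β r)
      = ∑ l ∈ Finset.range (N + 1), (B (s (l+1)) - B (s l)) :=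
    Finset.sum_congr rfl (fun l _ => hmassB l)
  rw [this, Finset.sum_range_sub (fun l => B (s l)), hsN1]
  have hs0 : s 0 = a := by simp [hs]
  rw [hs0, hBa, hBb, sub_zero]

open MeasureTheory Set Finset in
/-- One-sided per-interval estimate for the consensus flow. -/
lemma consensus_piece {n : ℕ} (x : Fin n → ℝ → ℝ) (a : Fin n → Fin n → ℝ → ℝ) (β : ℝ → ℝ)
    (u v h Q q P p : ℝ) (huv : u ≤ v) (hh : h ≤ 1 / 4)
    (ha0 : ∀ i j t, 0 ≤ a i j t)
    (hβ0 : ∀ t, 0 ≤ β t)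
    (hrow : ∀ i t, (∑ j, a i j t) ≤ β t)
    (hβi : IntervalIntegrable β volume u v)
    (hgi : ∀ i, IntervalIntegrable (fun r => ∑ j, a i j r * (x j r - x i r)) volume u v)
    (hmass : (∫ r in u..v, β r) ≤ h)
    (heq : ∀ i, ∀ s ∈ Set.Icc u v,
      x i s = x i u + ∫ r in u..s, ∑ j, a i j r * (x j r - x i r))
    (hQ : ∀ i, ∀ s ∈ Set.Icc u v, x i s ≤ Q)
    (hq : ∀ i, ∀ s ∈ Set.Icc u v, q ≤ x i s)
    (hQatt : ∃ i, ∃ s ∈ Set.Icc u v, x i s = Q)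
    (hqatt : ∃ i, ∃ s ∈ Set.Icc u v, x i s = q)
    (hP : ∀ i, x i u ≤ P) (hp : ∀ i, p ≤ x i u) :
    Q ≤ P + 4 * h ^ 2 * (P - p) := by
  have h0 : 0 ≤ h := le_trans (intervalIntegral.integral_nonneg huv (fun t _ => hβ0 t)) hmass
  obtain ⟨i1, s1, hs1, hQ1⟩ := hQatt
  obtain ⟨i2, s2, hs2, hq2⟩ := hqatt
  have hQq : 0 ≤ Q - q := by have := hq i1 s1 hs1; linarith
  have hPp : 0 ≤ P - p := by have := hP i1; have := hp i1; linarith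
  have hsubβ : ∀ s ∈ Set.Icc u v, IntervalIntegrable β volume u s := by
    intro s hs
    refine hβi.mono_set ?_
    rw [Set.uIcc_of_le huv, Set.uIcc_of_le hs.1]
    exact Set.Icc_subset_Icc le_rfl hs.2
  have hsubβ2 : ∀ s ∈ Set.Icc u v, IntervalIntegrable β volume s v := by
    intro s hs
    refine hβi.mono_set ?_
    rw [Set.uIcc_of_le huv, Set.uIcc_of_le hs.2]
    exact Set.Icc_subset_Icc hs.1 le_rfl
  have hsubg : ∀ i, ∀ s ∈ Set.Icc u v,
      IntervalIntegrable (fun r => ∑ j, a i j r * (x j r - x i r)) volume u s := by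
    intro i s hs
    refine (hgi i).mono_set ?_
    rw [Set.uIcc_of_le huv, Set.uIcc_of_le hs.1]
    exact Set.Icc_subset_Icc le_rfl hs.2
  have hmass' : ∀ s ∈ Set.Icc u v, (0 ≤ ∫ r in u..s, β r) ∧ (∫ r in u..s, β r) ≤ h := by
    intro s hs
    refine ⟨intervalIntegral.integral_nonneg hs.1 (fun t _ => hβ0 t), ?_⟩
    have hadd := intervalIntegral.integral_add_adjacent_intervals (hsubβ s hs) (hsubβ2 s hs)
    have h2 : 0 ≤ ∫ r in s..v, β r := intervalIntegral.integral_nonneg hs.2 (fun t _ => hβ0 t)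
    linarith
  have hosc : ∀ i, ∀ s ∈ Set.Icc u v,
      x i u - h * (Q - q) ≤ x i s ∧ x i s ≤ x i u + h * (Q - q) := by
    intro i s hs
    have hIccsub : Set.Icc u s ⊆ Set.Icc u v := Set.Icc_subset_Icc le_rfl hs.2
    have hptw : ∀ r ∈ Set.Icc u s, (∑ j, a i j r * (x j r - x i r)) ≤ β r * (Q - q) := by
      intro r hr
      have hr' := hIccsub hr
      calc (∑ j, a i j r * (x j r - x i r)) ≤ ∑ j, a i j r * (Q - q) := by
            refine Finset.sum_le_sum (fun j _ => ?_)
            exact mul_le_mul_of_nonneg_left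
              (by have := hQ j r hr'; have := hq i r hr'; linarith) (ha0 i j r)
        _ = (∑ j, a i j r) * (Q - q) := (Finset.sum_mul ..).symm
        _ ≤ β r * (Q - q) := mul_le_mul_of_nonneg_right (hrow i r) hQq
    have hptw' : ∀ r ∈ Set.Icc u s, -(β r * (Q - q)) ≤ ∑ j, a i j r * (x j r - x i r) := by
      intro r hr
      have hr' := hIccsub hr
      have : (∑ j, a i j r * (-(Q - q))) ≤ ∑ j, a i j r * (x j r - x i r) := by
        refine Finset.sum_le_sum (fun j _ => ?_)
        exact mul_le_mul_of_nonneg_left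
          (by have := hQ i r hr'; have := hq j r hr'; linarith) (ha0 i j r)
      have h2 : (∑ j, a i j r) * (Q - q) ≤ β r * (Q - q) :=
        mul_le_mul_of_nonneg_right (hrow i r) hQq
      have h3 : (∑ j, a i j r * (-(Q - q))) = -((∑ j, a i j r) * (Q - q)) := by
        rw [← Finset.sum_mul]; ring
      linarith
    have hub : (∫ r in u..s, ∑ j, a i j r * (x j r - x i r)) ≤ h * (Q - q) := by
      calc (∫ r in u..s, ∑ j, a i j r * (x j r - x i r))
          ≤ ∫ r in u..s, β r * (Q - q) :=
            intervalIntegral.integral_mono_on hs.1 (hsubg i s hs)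
              ((hsubβ s hs).mul_const _) hptw
        _ = (∫ r in u..s, β r) * (Q - q) := intervalIntegral.integral_mul_const _ _
        _ ≤ h * (Q - q) := mul_le_mul_of_nonneg_right (hmass' s hs).2 hQq
    have hlb : -(h * (Q - q)) ≤ ∫ r in u..s, ∑ j, a i j r * (x j r - x i r) := by
      have : (∫ r in u..s, -(β r * (Q - q))) ≤ ∫ r in u..s, ∑ j, a i j r * (x j r - x i r) :=
        intervalIntegral.integral_mono_on hs.1 (((hsubβ s hs).mul_const _).neg)
          (hsubg i s hs) hptw'
      rw [intervalIntegral.integral_neg, intervalIntegral.integral_mul_const] at this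
      have h2 : (∫ r in u..s, β r) * (Q - q) ≤ h * (Q - q) :=
        mul_le_mul_of_nonneg_right (hmass' s hs).2 hQq
      linarith
    have := heq i s hs
    constructor <;> linarith
  have hQq2 : Q - q ≤ 2 * (P - p) := by
    have h1 := (hosc i1 s1 hs1).2
    have h2 := (hosc i2 s2 hs2).1
    have h3 := hP i1; have h4 := hp i2
    nlinarith [hQq]
  have hxu : x i1 u ≤ Q := hQ i1 u ⟨le_rfl, huv⟩
  have hC : 0 ≤ Q - x i1 u + h * (Q - q) := by nlinarith
  have href : Q ≤ x i1 u + h * (Q - x i1 u + h * (Q - q)) := by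
    have hIccsub : Set.Icc u s1 ⊆ Set.Icc u v := Set.Icc_subset_Icc le_rfl hs1.2
    set C := Q - x i1 u + h * (Q - q) with hCdef
    have hptw : ∀ r ∈ Set.Icc u s1, (∑ j, a i1 j r * (x j r - x i1 r)) ≤ β r * C := by
      intro r hr
      have hr' := hIccsub hr
      have hxlow := (hosc i1 r hr').1
      have hxQ : x i1 r ≤ Q := hQ i1 r hr'
      calc (∑ j, a i1 j r * (x j r - x i1 r)) ≤ ∑ j, a i1 j r * (Q - x i1 r) := by
            refine Finset.sum_le_sum (fun j _ => ?_)
            exact mul_le_mul_of_nonneg_left (by have := hQ j r hr'; linarith) (ha0 i1 j r)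
        _ = (∑ j, a i1 j r) * (Q - x i1 r) := (Finset.sum_mul ..).symm
        _ ≤ β r * (Q - x i1 r) := mul_le_mul_of_nonneg_right (hrow i1 r) (by linarith)
        _ ≤ β r * C := mul_le_mul_of_nonneg_left (by rw [hCdef]; linarith) (hβ0 r)
    have hint : (∫ r in u..s1, ∑ j, a i1 j r * (x j r - x i1 r))
        ≤ (∫ r in u..s1, β r) * C := by
      calc (∫ r in u..s1, ∑ j, a i1 j r * (x j r - x i1 r))
          ≤ ∫ r in u..s1, β r * C :=
            intervalIntegral.integral_mono_on hs1.1 (hsubg i1 s1 hs1)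
              ((hsubβ s1 hs1).mul_const _) hptw
        _ = (∫ r in u..s1, β r) * C := intervalIntegral.integral_mul_const _ _
    have hfin : (∫ r in u..s1, β r) * C ≤ h * C :=
      mul_le_mul_of_nonneg_right (hmass' s1 hs1).2 hC
    have := heq i1 s1 hs1
    rw [hQ1] at this
    linarith
  have e1 : (1 - h) * (Q - x i1 u) ≤ h ^ 2 * (Q - q) := by nlinarith [href]
  have e2 : h ^ 2 * (Q - q) ≤ 2 * h ^ 2 * (P - p) := by nlinarith [sq_nonneg h]
  have e3 : x i1 u ≤ P := hP i1
  nlinarith [mul_nonneg (mul_nonneg h0 h0) hPp, sq_nonneg h]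

open MeasureTheory Set Finset in
set_option maxHeartbeats 1000000 in
/-- Maximum principle: solutions of the consensus flow stay below any upper bound
on the initial data. -/
lemma consensus_box_upper {n : ℕ} (tp tp1 : ℝ) (htp : tp ≤ tp1)
    (a : Fin n → Fin n → ℝ → ℝ)
    (ha0 : ∀ i j t, 0 ≤ a i j t)
    (ha_int : ∀ i j, IntervalIntegrable (a i j) volume tp tp1)
    (x : Fin n → ℝ → ℝ) (hxc : ∀ i, Continuous (x i))
    (hxe : ∀ i τ, τ ∈ Set.Icc tp tp1 →
      x i τ = x i tp + ∫ s in tp..τ, ∑ j, a i j s * (x j s - x i s))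
    (c : ℝ) (hc : ∀ i, x i tp ≤ c) :
    ∀ i τ, τ ∈ Set.Icc tp tp1 → x i τ ≤ c := by
  intro i0 τend hτ
  have hne : (Finset.univ : Finset (Fin n)).Nonempty := ⟨i0, Finset.mem_univ i0⟩
  set F : ℝ → ℝ := fun τ => Finset.univ.sup' hne (fun i => x i τ) with hF
  set G : ℝ → ℝ := fun τ => Finset.univ.inf' hne (fun i => x i τ) with hG
  set β : ℝ → ℝ := fun r => ∑ i, ∑ j, a i j r with hβ
  have hβ0 : ∀ t, 0 ≤ β t :=
    fun t => Finset.sum_nonneg (fun i _ => Finset.sum_nonneg (fun j _ => ha0 i j t))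
  have hrow : ∀ i t, (∑ j, a i j t) ≤ β t := by
    intro i t
    exact Finset.single_le_sum (f := fun i => ∑ j, a i j t)
      (fun i _ => Finset.sum_nonneg fun j _ => ha0 i j t) (Finset.mem_univ i)
  have hβint : IntervalIntegrable β volume tp tp1 := by
    have : IntervalIntegrable (∑ i : Fin n, ∑ j : Fin n, fun r => a i j r) volume tp tp1 :=
      IntervalIntegrable.sum _ (fun i _ => IntervalIntegrable.sum _ (fun j _ => ha_int i j))
    simpa [Finset.sum_fn] using this
  have hgint : ∀ i, IntervalIntegrable
      (fun r => ∑ j, a i j r * (x j r - x i r)) volume tp tp1 := by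
    intro i
    have : IntervalIntegrable
        (∑ j : Fin n, fun r => a i j r * (x j r - x i r)) volume tp tp1 :=
      IntervalIntegrable.sum _ (fun j _ =>
        (ha_int i j).mul_continuousOn (((hxc j).sub (hxc i)).continuousOn))
    simpa [Finset.sum_fn] using this
  have hmonoint : ∀ (f : ℝ → ℝ), IntervalIntegrable f volume tp tp1 →
      ∀ u v : ℝ, tp ≤ u → u ≤ v → v ≤ tp1 → IntervalIntegrable f volume u v := by
    intro f hf u v h1 h2 h3
    refine hf.mono_set ?_
    rw [Set.uIcc_of_le htp, Set.uIcc_of_le h2]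
    exact Set.Icc_subset_Icc h1 h3
  have hrestart : ∀ i (u v : ℝ), tp ≤ u → u ≤ v → v ≤ tp1 → ∀ s ∈ Set.Icc u v,
      x i s = x i u + ∫ r in u..s, ∑ j, a i j r * (x j r - x i r) := by
    intro i u v hu huv hv s hs
    have h1 : IntervalIntegrable (fun r => ∑ j, a i j r * (x j r - x i r)) volume tp u :=
      hmonoint _ (hgint i) tp u le_rfl hu (le_trans huv hv)
    have h2 : IntervalIntegrable (fun r => ∑ j, a i j r * (x j r - x i r)) volume u s :=
      hmonoint _ (hgint i) u s hu hs.1 (le_trans hs.2 hv)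
    have hadd := intervalIntegral.integral_add_adjacent_intervals h1 h2
    have e1 := hxe i u ⟨hu, le_trans huv hv⟩
    have e2 := hxe i s ⟨le_trans hu hs.1, le_trans (le_trans hs.2 hv) le_rfl⟩
    linarith
  refine le_of_forall_pos_le_add (fun ε hε => ?_)
  set K := ∫ r in tp..tp1, β r with hKdef
  have hK0 : 0 ≤ K := intervalIntegral.integral_nonneg htp (fun t _ => hβ0 t)
  set D0 := F tp - G tp with hD0
  have hD00 : 0 ≤ D0 := by
    have h1 : x i0 tp ≤ F tp := Finset.le_sup' (fun i => x i tp) (Finset.mem_univ i0)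
    have h2 : G tp ≤ x i0 tp := Finset.inf'_le (fun i => x i tp) (Finset.mem_univ i0)
    simp only [hD0]; linarith
  set A := D0 * Real.exp (16 * K ^ 2) with hA
  have hA0 : 0 ≤ A := by positivity
  set CC := 8 * K ^ 2 * A with hCC
  have hCC0 : 0 ≤ CC := by positivity
  obtain ⟨N, hNgt⟩ := exists_nat_gt (max (4 * K) (CC / ε))
  have hNR : (0:ℝ) < N := by
    refine lt_of_le_of_lt ?_ hNgt
    exact le_trans (by positivity) (le_max_left _ _)
  have hN1 : 0 < N := by exact_mod_cast hNR
  have hN1' : (1:ℝ) ≤ N := by exact_mod_cast hN1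
  set h := K / N with hh
  have h0 : 0 ≤ h := by positivity
  have hh4 : h ≤ 1 / 4 := by
    have h4K : 4 * K < N := lt_of_le_of_lt (le_max_left _ _) hNgt
    rw [hh, div_le_iff₀ hNR]
    linarith
  have hβτ : IntervalIntegrable β volume tp τend := hmonoint _ hβint tp τend le_rfl hτ.1 hτ.2
  obtain ⟨s, hs0, hsN, hsmono, hsmem, hsmass, _⟩ :=
    consensus_partition_exists β tp τend hτ.1 hβ0 hβτ N hN1
  have hKτ : (∫ r in tp..τend, β r) ≤ K := by
    have hi2 : IntervalIntegrable β volume τend tp1 := hmonoint _ hβint τend tp1 hτ.1 hτ.2 le_rfl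
    have hadd := intervalIntegral.integral_add_adjacent_intervals hβτ hi2
    have hnn : 0 ≤ ∫ r in τend..tp1, β r :=
      intervalIntegral.integral_nonneg hτ.2 (fun t _ => hβ0 t)
    rw [hKdef]; linarith
  have hmassh : ∀ m, m ≤ N → (∫ r in s m..s (m + 1), β r) ≤ h := by
    intro m hm
    refine le_trans (hsmass m hm) ?_
    rw [hh]
    gcongr
  set E := 4 * h ^ 2 * A with hE
  have hE0 : 0 ≤ E := by positivity
  have hpow : ∀ m, m ≤ N → (1 + 8 * h ^ 2) ^ m ≤ Real.exp (16 * K ^ 2) := by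
    intro m hm
    have h1 : (1 + 8 * h ^ 2) ≤ Real.exp (8 * h ^ 2) := by
      have := Real.add_one_le_exp (8 * h ^ 2); linarith
    have h2 : (1 + 8 * h ^ 2) ^ m ≤ (Real.exp (8 * h ^ 2)) ^ m :=
      pow_le_pow_left₀ (by positivity) h1 m
    rw [← Real.exp_nat_mul] at h2
    refine h2.trans (Real.exp_le_exp.2 ?_)
    have hmN : (m:ℝ) ≤ N := by exact_mod_cast hm
    have hm0 : (0:ℝ) ≤ m := Nat.cast_nonneg m
    rw [hh]
    have hsq : ((K / N) ^ 2) * m ≤ K ^ 2 := by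
      rw [div_pow, div_mul_eq_mul_div, div_le_iff₀ (by positivity)]
      have e1 : K ^ 2 * (m:ℝ) ≤ K ^ 2 * N := mul_le_mul_of_nonneg_left hmN (sq_nonneg K)
      have e2 : K ^ 2 * (N:ℝ) ≤ K ^ 2 * ((N:ℝ) ^ 2) :=
        mul_le_mul_of_nonneg_left (by nlinarith) (sq_nonneg K)
      linarith
    nlinarith [hsq, sq_nonneg K]
  have key : ∀ m, m ≤ N + 1 →
      F (s m) ≤ F tp + m * E ∧ F (s m) - G (s m) ≤ D0 * (1 + 8 * h ^ 2) ^ m := by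
    intro m
    induction m with
    | zero =>
      intro _
      rw [hs0]
      constructor
      · simp
      · simp; linarith
    | succ m ih =>
      intro hm
      have hmN : m ≤ N := by omega
      obtain ⟨ih1, ih2⟩ := ih (by omega)
      have huv : s m ≤ s (m + 1) := hsmono m hmN
      have humem : s m ∈ Set.Icc tp τend := hsmem m (by omega)
      have hvmem : s (m + 1) ∈ Set.Icc tp τend := hsmem (m + 1) (by omega)
      have hutp : tp ≤ s m := humem.1
      have hvtp1 : s (m + 1) ≤ tp1 := le_trans hvmem.2 hτ.2
      have hcpt : IsCompact (Set.Icc (s m) (s (m + 1))) := isCompact_Icc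
      have hnemem : (Set.Icc (s m) (s (m + 1))).Nonempty := ⟨s m, le_rfl, huv⟩
      choose σQ hσQmem hσQ using
        fun i => hcpt.exists_isMaxOn hnemem ((hxc i).continuousOn
          (s := Set.Icc (s m) (s (m + 1))))
      choose σq hσqmem hσq using
        fun i => hcpt.exists_isMinOn hnemem ((hxc i).continuousOn
          (s := Set.Icc (s m) (s (m + 1))))
      obtain ⟨iQ, _, hiQ⟩ :=
        Finset.exists_max_image Finset.univ (fun i => x i (σQ i)) hne
      obtain ⟨iq, _, hiq⟩ :=
        Finset.exists_min_image Finset.univ (fun i => x i (σq i)) hne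
      set Q := x iQ (σQ iQ) with hQdef
      set q := x iq (σq iq) with hqdef
      have hQb : ∀ i, ∀ r ∈ Set.Icc (s m) (s (m + 1)), x i r ≤ Q :=
        fun i r hr => le_trans (hσQ i hr) (hiQ i (Finset.mem_univ i))
      have hqb : ∀ i, ∀ r ∈ Set.Icc (s m) (s (m + 1)), q ≤ x i r :=
        fun i r hr => le_trans (hiq i (Finset.mem_univ i)) (hσq i hr)
      have heq' : ∀ i, ∀ r ∈ Set.Icc (s m) (s (m + 1)),
          x i r = x i (s m) +
            ∫ ρ in (s m)..r, ∑ j, a i j ρ * (x j ρ - x i ρ) :=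
        fun i r hr => hrestart i (s m) (s (m + 1)) hutp huv hvtp1 r hr
      have hβuv : IntervalIntegrable β volume (s m) (s (m + 1)) :=
        hmonoint _ hβint (s m) (s (m + 1)) hutp huv hvtp1
      have hguv : ∀ i, IntervalIntegrable
          (fun r => ∑ j, a i j r * (x j r - x i r)) volume (s m) (s (m + 1)) :=
        fun i => hmonoint _ (hgint i) (s m) (s (m + 1)) hutp huv hvtp1
      have hmassm : (∫ r in (s m)..(s (m + 1)), β r) ≤ h := hmassh m hmN
      have hP' : ∀ i, x i (s m) ≤ F (s m) :=
        fun i => Finset.le_sup' (fun i => x i (s m)) (Finset.mem_univ i)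
      have hp' : ∀ i, G (s m) ≤ x i (s m) :=
        fun i => Finset.inf'_le (fun i => x i (s m)) (Finset.mem_univ i)
      have hpiece1 := consensus_piece x a β (s m) (s (m + 1)) h Q q (F (s m)) (G (s m))
        huv hh4 ha0 hβ0 hrow hβuv hguv hmassm heq' hQb hqb
        ⟨iQ, σQ iQ, hσQmem iQ, rfl⟩ ⟨iq, σq iq, hσqmem iq, rfl⟩ hP' hp'
      -- negated system
      have hpiece2 : G (s m) - 4 * h ^ 2 * (F (s m) - G (s m)) ≤ q := by
        set y : Fin n → ℝ → ℝ := fun i t => -(x i t) with hy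
        have hrw : ∀ i, (fun r => ∑ j, a i j r * (y j r - y i r))
            = fun r => -(∑ j, a i j r * (x j r - x i r)) := by
          intro i
          funext r
          simp only [hy]
          rw [← Finset.sum_neg_distrib]
          exact Finset.sum_congr rfl (fun j _ => by ring)
        have hgyuv : ∀ i, IntervalIntegrable
            (fun r => ∑ j, a i j r * (y j r - y i r)) volume (s m) (s (m + 1)) := by
          intro i
          rw [hrw i]
          exact (hguv i).neg
        have heqy : ∀ i, ∀ r ∈ Set.Icc (s m) (s (m + 1)),
            y i r = y i (s m) +
              ∫ ρ in (s m)..r, ∑ j, a i j ρ * (y j ρ - y i ρ) := by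
          intro i r hr
          rw [hrw i, intervalIntegral.integral_neg]
          have := heq' i r hr
          simp only [hy]
          linarith
        have := consensus_piece y a β (s m) (s (m + 1)) h (-q) (-Q)
          (-(G (s m))) (-(F (s m))) huv hh4 ha0 hβ0 hrow hβuv hgyuv hmassm heqy
          (fun i r hr => by simp only [hy]; have := hqb i r hr; linarith)
          (fun i r hr => by simp only [hy]; have := hQb i r hr; linarith)
          ⟨iq, σq iq, hσqmem iq, by simp [hy, hqdef]⟩
          ⟨iQ, σQ iQ, hσQmem iQ, by simp [hy, hQdef]⟩
          (fun i => by simp only [hy]; have := hp' i; linarith)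
          (fun i => by simp only [hy]; have := hP' i; linarith)
        linarith
      have hFv : F (s (m + 1)) ≤ Q :=
        Finset.sup'_le hne _ (fun i _ => hQb i (s (m + 1)) ⟨huv, le_rfl⟩)
      have hGv : q ≤ G (s (m + 1)) :=
        Finset.le_inf' hne _ (fun i _ => hqb i (s (m + 1)) ⟨huv, le_rfl⟩)
      have hDm : F (s m) - G (s m) ≤ D0 * Real.exp (16 * K ^ 2) := by
        refine le_trans ih2 ?_
        exact mul_le_mul_of_nonneg_left (hpow m hmN) hD00
      have hD0m : 0 ≤ F (s m) - G (s m) := by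
        have h1 := hP' i0; have h2 := hp' i0; linarith
      constructor
      · have step : F (s (m + 1)) ≤ F (s m) + 4 * h ^ 2 * (F (s m) - G (s m)) :=
          le_trans hFv hpiece1
        have hEstep : 4 * h ^ 2 * (F (s m) - G (s m)) ≤ E := by
          rw [hE, hA]
          exact mul_le_mul_of_nonneg_left hDm (by positivity)
        push_cast
        push_cast at ih1
        linarith
      · have step2 : F (s (m + 1)) - G (s (m + 1)) ≤
            (F (s m) - G (s m)) * (1 + 8 * h ^ 2) := by
          have := hpiece1
          have := hpiece2
          nlinarith [hFv, hGv]
        refine le_trans step2 ?_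
        rw [pow_succ (1 + 8 * h ^ 2) m, ← mul_assoc]
        have hfac : (0:ℝ) ≤ 1 + 8 * h ^ 2 := by nlinarith [sq_nonneg h]
        exact mul_le_mul_of_nonneg_right ih2 hfac
  obtain ⟨kf, _⟩ := key (N + 1) le_rfl
  rw [hsN] at kf
  have hx0F : x i0 τend ≤ F τend := Finset.le_sup' (fun i => x i τend) (Finset.mem_univ i0)
  have hFc : F tp ≤ c := Finset.sup'_le hne _ (fun i _ => hc i)
  have hfinal : ((N:ℝ) + 1) * E ≤ CC / N := by
    rw [hE, hCC, hh, div_pow]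
    have h1 : ((N:ℝ) + 1) * (4 * (K ^ 2 / (N:ℝ) ^ 2) * A)
        = 4 * K ^ 2 * A * (((N:ℝ) + 1) / (N:ℝ) ^ 2) := by ring
    have h2 : 8 * K ^ 2 * A / (N:ℝ) = 4 * K ^ 2 * A * (2 / (N:ℝ)) := by ring
    rw [h1, h2]
    refine mul_le_mul_of_nonneg_left ?_ (by positivity)
    rw [div_le_div_iff₀ (pow_pos hNR 2) hNR]
    nlinarith
  have hCCε : CC / N < ε := by
    have h1 : CC / ε < N := lt_of_le_of_lt (le_max_right _ _) hNgt
    rw [div_lt_iff₀ hNR]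
    rw [div_lt_iff₀ hε] at h1
    linarith
  have : ((N:ℝ) + 1) * E < ε := lt_of_le_of_lt hfinal hCCε
  push_cast at kf
  linarith

/-- `1 - u ≥ exp(-(u + 2u²))` for `0 ≤ u ≤ 1/2`. -/
lemma consensus_one_sub_exp_aux (u : ℝ) (h0 : 0 ≤ u) (h2 : u ≤ 1 / 2) :
    Real.exp (-(u + 2 * u ^ 2)) ≤ 1 - u := by
  have he : 1 + (u + 2 * u ^ 2) ≤ Real.exp (u + 2 * u ^ 2) := by
    have := Real.add_one_le_exp (u + 2 * u ^ 2); linarith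
  have hepos : 0 < Real.exp (u + 2 * u ^ 2) := Real.exp_pos _
  have hkey : 1 ≤ (1 - u) * Real.exp (u + 2 * u ^ 2) := by
    have h1u : 0 ≤ 1 - u := by linarith
    have := mul_le_mul_of_nonneg_left he h1u
    nlinarith
  rw [Real.exp_neg, inv_eq_one_div, div_le_iff₀ hepos]
  linarith

set_option maxHeartbeats 1000000 in
open MeasureTheory Set Finset in
/-- Grönwall-type lower bound for `1 - x k` along the consensus flow. -/
lemma consensus_gronwall_lower {n : ℕ} (tp tp1 : ℝ) (htp : tp ≤ tp1)
    (a : Fin n → Fin n → ℝ → ℝ) (ha0 : ∀ i j t, 0 ≤ a i j t)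
    (ha_int : ∀ i j, IntervalIntegrable (a i j) volume tp tp1)
    (x : Fin n → ℝ → ℝ) (hxc : ∀ i, Continuous (x i))
    (hxe : ∀ i τ, τ ∈ Set.Icc tp tp1 →
      x i τ = x i tp + ∫ s in tp..τ, ∑ j, a i j s * (x j s - x i s))
    (hbox : ∀ i τ, τ ∈ Set.Icc tp tp1 → x i τ ∈ Set.Icc (0 : ℝ) 1)
    (k : Fin n) (hk0 : x k tp = 0) :
    Real.exp (-(∫ t in tp..tp1, ∑ j ∈ Finset.univ.erase k, a k j t)) ≤ 1 - x k tp1 := by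
  set βk : ℝ → ℝ := fun r => ∑ j ∈ Finset.univ.erase k, a k j r with hβk
  have hβk0 : ∀ t, 0 ≤ βk t := fun t => Finset.sum_nonneg (fun j _ => ha0 k j t)
  have hβkint : IntervalIntegrable βk volume tp tp1 := by
    have : IntervalIntegrable (∑ j ∈ Finset.univ.erase k, fun r => a k j r) volume tp tp1 :=
      IntervalIntegrable.sum _ (fun j _ => ha_int k j)
    simpa [hβk, Finset.sum_fn, Pi.sub_def] using this
  set R := ∫ t in tp..tp1, βk t with hRdef
  have hR0 : 0 ≤ R := intervalIntegral.integral_nonneg htp (fun t _ => hβk0 t)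
  have hfuneq : (fun r => ∑ j, a k j r * (x j r - x k r))
      = fun r => ∑ j ∈ Finset.univ.erase k, a k j r * (x j r - x k r) := by
    funext r
    exact (Finset.sum_erase _ (by ring)).symm
  have hgint : IntervalIntegrable
      (fun r => ∑ j ∈ Finset.univ.erase k, a k j r * (x j r - x k r)) volume tp tp1 := by
    rw [← hfuneq]
    have : IntervalIntegrable
        (∑ j : Fin n, fun r => a k j r * (x j r - x k r)) volume tp tp1 :=
      IntervalIntegrable.sum _ (fun j _ =>
        (ha_int k j).mul_continuousOn (((hxc j).sub (hxc k)).continuousOn))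
    simpa [Finset.sum_fn] using this
  have hmonoint : ∀ (f : ℝ → ℝ), IntervalIntegrable f volume tp tp1 →
      ∀ u v : ℝ, tp ≤ u → u ≤ v → v ≤ tp1 → IntervalIntegrable f volume u v := by
    intro f hf u v h1 h2 h3
    refine hf.mono_set ?_
    rw [Set.uIcc_of_le htp, Set.uIcc_of_le h2]
    exact Set.Icc_subset_Icc h1 h3
  have hrestart : ∀ (u v : ℝ), tp ≤ u → u ≤ v → v ≤ tp1 → ∀ s ∈ Set.Icc u v,
      x k s = x k u +
        ∫ r in u..s, ∑ j ∈ Finset.univ.erase k, a k j r * (x j r - x k r) := by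
    intro u v hu huv hv s hs
    have h1 := hmonoint _ hgint tp u le_rfl hu (le_trans huv hv)
    have h2 := hmonoint _ hgint u s hu hs.1 (le_trans hs.2 hv)
    have hadd := intervalIntegral.integral_add_adjacent_intervals h1 h2
    have e1 := hxe k u ⟨hu, le_trans huv hv⟩
    have e2 := hxe k s ⟨le_trans hu hs.1, le_trans hs.2 hv⟩
    rw [hfuneq] at e1 e2
    linarith
  refine le_of_forall_pos_le_add (fun ε hε => ?_)
  obtain ⟨N, hNgt⟩ := exists_nat_gt (max (2 * R) (4 * R ^ 2 / ε))
  have hNR : (0:ℝ) < N := by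
    refine lt_of_le_of_lt ?_ hNgt
    exact le_trans (by positivity) (le_max_left _ _)
  have hN1 : 0 < N := by exact_mod_cast hNR
  have hN1' : (1:ℝ) ≤ N := by exact_mod_cast hN1
  set h := R / N with hh
  have h0 : 0 ≤ h := by positivity
  have hh2 : h ≤ 1 / 2 := by
    have h2R : 2 * R < N := lt_of_le_of_lt (le_max_left _ _) hNgt
    rw [hh, div_le_iff₀ hNR]
    linarith
  obtain ⟨s, hs0, hsN, hsmono, hsmem, hsmass, hssum⟩ :=
    consensus_partition_exists βk tp tp1 htp hβk0 hβkint N hN1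
  set d : ℕ → ℝ := fun l => ∫ r in s l..s (l + 1), βk r with hd
  have hd0 : ∀ l, l ≤ N → 0 ≤ d l :=
    fun l hl => intervalIntegral.integral_nonneg (hsmono l hl) (fun t _ => hβk0 t)
  have hdh : ∀ l, l ≤ N → d l ≤ h := by
    intro l hl
    refine le_trans (hsmass l hl) ?_
    rw [hh, hRdef]
  have key : ∀ m, m ≤ N + 1 →
      (∏ l ∈ Finset.range m, (1 - d l)) - (m : ℝ) * h ^ 2 ≤ 1 - x k (s m) := by
    intro m
    induction m with
    | zero =>
      intro _
      rw [hs0, hk0]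
      simp
    | succ m ih =>
      intro hm
      have hmN : m ≤ N := by omega
      have ihm := ih (by omega)
      have huv : s m ≤ s (m + 1) := hsmono m hmN
      have humem : s m ∈ Set.Icc tp tp1 := hsmem m (by omega)
      have hvmem : s (m + 1) ∈ Set.Icc tp tp1 := hsmem (m + 1) (by omega)
      have hIccTT : ∀ r ∈ Set.Icc (s m) (s (m + 1)), r ∈ Set.Icc tp tp1 :=
        fun r hr => ⟨le_trans humem.1 hr.1, le_trans hr.2 hvmem.2⟩
      -- lower pointwise bound on x k over the subinterval
      have hlow : ∀ r ∈ Set.Icc (s m) (s (m + 1)), x k (s m) - d m ≤ x k r := by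
        intro r hr
        have heqr := hrestart (s m) (s (m + 1)) humem.1 huv hvmem.2 r hr
        have hβsub1 := hmonoint _ hβkint (s m) r humem.1 hr.1
          (le_trans hr.2 hvmem.2)
        have hgsub1 := hmonoint _ hgint (s m) r humem.1 hr.1
          (le_trans hr.2 hvmem.2)
        have hptw : ∀ ρ ∈ Set.Icc (s m) r,
            -(βk ρ) ≤ ∑ j ∈ Finset.univ.erase k, a k j ρ * (x j ρ - x k ρ) := by
          intro ρ hρ
          have hρ' : ρ ∈ Set.Icc tp tp1 :=
            hIccTT ρ ⟨hρ.1, le_trans hρ.2 hr.2⟩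
          have h1 : ∀ j ∈ Finset.univ.erase k,
              -(a k j ρ) ≤ a k j ρ * (x j ρ - x k ρ) := by
            intro j _
            have hbj := hbox j ρ hρ'
            have hbk := hbox k ρ hρ'
            nlinarith [ha0 k j ρ, hbj.1, hbk.2]
          have h2 : -(βk ρ) = ∑ j ∈ Finset.univ.erase k, -(a k j ρ) := by
            rw [hβk]; rw [← Finset.sum_neg_distrib]
          rw [h2]
          exact Finset.sum_le_sum h1
        have hint : -(∫ ρ in (s m)..r, βk ρ)
            ≤ ∫ ρ in (s m)..r, ∑ j ∈ Finset.univ.erase k, a k j ρ * (x j ρ - x k ρ) := by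
          have hnegint : IntervalIntegrable (fun ρ => -(βk ρ)) volume (s m) r :=
            hβsub1.neg
          have := intervalIntegral.integral_mono_on hr.1 hnegint hgsub1 hptw
          rwa [intervalIntegral.integral_neg] at this
        have hβr : (∫ ρ in (s m)..r, βk ρ) ≤ d m := by
          have hβsub2 := hmonoint _ hβkint r (s (m + 1))
            (le_trans humem.1 hr.1) hr.2 hvmem.2
          have hadd := intervalIntegral.integral_add_adjacent_intervals hβsub1 hβsub2
          have hnn : 0 ≤ ∫ ρ in r..(s (m + 1)), βk ρ :=
            intervalIntegral.integral_nonneg hr.2 (fun t _ => hβk0 t)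
          rw [hd]
          linarith
        linarith
      have hdm0 : 0 ≤ d m := hd0 m hmN
      have hxk1 : x k (s m) ≤ 1 := (hbox k (s m) humem).2
      have hC : 0 ≤ (1 - x k (s m)) + d m := by linarith
      -- upper bound on x k at the right endpoint
      have hup : x k (s (m + 1)) ≤ x k (s m) + d m * ((1 - x k (s m)) + d m) := by
        have heqv := hrestart (s m) (s (m + 1)) humem.1 huv hvmem.2
          (s (m + 1)) ⟨huv, le_rfl⟩
        have hβsub := hmonoint _ hβkint (s m) (s (m + 1)) humem.1 huv hvmem.2
        have hgsub := hmonoint _ hgint (s m) (s (m + 1)) humem.1 huv hvmem.2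
        have hptw : ∀ ρ ∈ Set.Icc (s m) (s (m + 1)),
            (∑ j ∈ Finset.univ.erase k, a k j ρ * (x j ρ - x k ρ))
              ≤ βk ρ * ((1 - x k (s m)) + d m) := by
          intro ρ hρ
          have hρ' := hIccTT ρ hρ
          have h1 : (∑ j ∈ Finset.univ.erase k, a k j ρ * (x j ρ - x k ρ))
              ≤ ∑ j ∈ Finset.univ.erase k, a k j ρ * (1 - x k ρ) := by
            refine Finset.sum_le_sum (fun j _ => ?_)
            exact mul_le_mul_of_nonneg_left
              (by have := (hbox j ρ hρ').2; linarith) (ha0 k j ρ)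
          have h2 : (∑ j ∈ Finset.univ.erase k, a k j ρ * (1 - x k ρ))
              = βk ρ * (1 - x k ρ) := (Finset.sum_mul ..).symm
          have h3 : βk ρ * (1 - x k ρ) ≤ βk ρ * ((1 - x k (s m)) + d m) :=
            mul_le_mul_of_nonneg_left (by have := hlow ρ hρ; linarith) (hβk0 ρ)
          linarith
        have hint : (∫ ρ in (s m)..(s (m + 1)),
              ∑ j ∈ Finset.univ.erase k, a k j ρ * (x j ρ - x k ρ))
            ≤ d m * ((1 - x k (s m)) + d m) := by
          calc (∫ ρ in (s m)..(s (m + 1)),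
                ∑ j ∈ Finset.univ.erase k, a k j ρ * (x j ρ - x k ρ))
              ≤ ∫ ρ in (s m)..(s (m + 1)), βk ρ * ((1 - x k (s m)) + d m) :=
                intervalIntegral.integral_mono_on huv hgsub (hβsub.mul_const _) hptw
            _ = (∫ ρ in (s m)..(s (m + 1)), βk ρ) * ((1 - x k (s m)) + d m) :=
                intervalIntegral.integral_mul_const _ _
            _ = d m * ((1 - x k (s m)) + d m) := by rw [hd]
        linarith
      -- recursion step
      have hdmh : d m ≤ h := hdh m hmN
      have h1dm : 0 ≤ 1 - d m := by linarith
      have hwv : (1 - x k (s m)) * (1 - d m) - d m ^ 2 ≤ 1 - x k (s (m + 1)) := by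
        nlinarith [hup]
      have e1 := mul_le_mul_of_nonneg_right ihm h1dm
      have e2 : (m : ℝ) * h ^ 2 * (1 - d m) ≤ (m : ℝ) * h ^ 2 := by
        have hm0 : (0:ℝ) ≤ (m : ℝ) := Nat.cast_nonneg m
        nlinarith [mul_nonneg (mul_nonneg hm0 (sq_nonneg h)) hdm0]
      have e3 : d m ^ 2 ≤ h ^ 2 := by nlinarith
      rw [Finset.prod_range_succ]
      push_cast
      nlinarith [e1, e2, e3, hwv]
  have hfin := key (N + 1) le_rfl
  rw [hsN] at hfin
  -- lower bound for the product
  have hsum : (∑ l ∈ Finset.range (N + 1), d l) = R := by rw [hRdef]; exact hssum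
  have hsq : (∑ l ∈ Finset.range (N + 1), d l ^ 2) ≤ h * R := by
    rw [← hsum, Finset.mul_sum]
    refine Finset.sum_le_sum (fun l hl => ?_)
    have hlN : l ≤ N := by
      have := Finset.mem_range.1 hl; omega
    nlinarith [hd0 l hlN, hdh l hlN]
  have hexp : Real.exp (-(R + 2 * h * R)) ≤ ∏ l ∈ Finset.range (N + 1), (1 - d l) := by
    calc Real.exp (-(R + 2 * h * R))
        ≤ Real.exp (∑ l ∈ Finset.range (N + 1), -(d l + 2 * d l ^ 2)) := by
          refine Real.exp_le_exp.2 ?_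
          have hexpand : (∑ l ∈ Finset.range (N + 1), -(d l + 2 * d l ^ 2))
              = -((∑ l ∈ Finset.range (N + 1), d l)
                + 2 * ∑ l ∈ Finset.range (N + 1), d l ^ 2) := by
            rw [Finset.sum_neg_distrib, Finset.sum_add_distrib, ← Finset.mul_sum]
          rw [hexpand, hsum]
          linarith [hsq]
      _ = ∏ l ∈ Finset.range (N + 1), Real.exp (-(d l + 2 * d l ^ 2)) :=
          Real.exp_sum _ _
      _ ≤ ∏ l ∈ Finset.range (N + 1), (1 - d l) := by
          refine Finset.prod_le_prod (fun l _ => (Real.exp_pos _).le) (fun l hl => ?_)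
          have hlN : l ≤ N := by
            have := Finset.mem_range.1 hl; omega
          exact consensus_one_sub_exp_aux (d l) (hd0 l hlN)
            (le_trans (hdh l hlN) hh2)
  -- final numeric assembly
  have hexp2 : Real.exp (-R) - 2 * h * R ≤ Real.exp (-(R + 2 * h * R)) := by
    have hsplit : Real.exp (-(R + 2 * h * R))
        = Real.exp (-R) * Real.exp (-(2 * h * R)) := by
      rw [← Real.exp_add]; ring_nf
    have h2' : 1 - 2 * h * R ≤ Real.exp (-(2 * h * R)) := by
      have := Real.add_one_le_exp (-(2 * h * R)); linarith
    have h3 : Real.exp (-R) ≤ 1 := by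
      rw [← Real.exp_zero]
      exact Real.exp_le_exp.2 (by linarith)
    have hepos : (0:ℝ) ≤ Real.exp (-R) := (Real.exp_pos _).le
    have h4 := mul_le_mul_of_nonneg_left h2' hepos
    have h5 : Real.exp (-R) * (2 * h * R) ≤ 2 * h * R := by
      nlinarith [mul_nonneg (mul_nonneg (by norm_num : (0:ℝ) ≤ 2) h0) hR0]
    rw [hsplit]
    nlinarith
  -- size bounds
  have hNg2 : 4 * R ^ 2 / ε < N := lt_of_le_of_lt (le_max_right _ _) hNgt
  have hsize : 2 * h * R + ((N:ℝ) + 1) * h ^ 2 ≤ ε := by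
    have hA : 2 * h * R = 2 * R ^ 2 / N := by rw [hh]; field_simp
    have hB : ((N:ℝ) + 1) * h ^ 2 ≤ 2 * R ^ 2 / N := by
      rw [hh, div_pow]
      have h1 : ((N:ℝ) + 1) * (R ^ 2 / (N:ℝ) ^ 2)
          = R ^ 2 * (((N:ℝ) + 1) / (N:ℝ) ^ 2) := by ring
      have h2 : 2 * R ^ 2 / (N:ℝ) = R ^ 2 * (2 / (N:ℝ)) := by ring
      rw [h1, h2]
      refine mul_le_mul_of_nonneg_left ?_ (sq_nonneg R)
      rw [div_le_div_iff₀ (pow_pos hNR 2) hNR]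
      nlinarith
    have hC' : 4 * R ^ 2 / N < ε := by
      rw [div_lt_iff₀ hNR]
      rw [div_lt_iff₀ hε] at hNg2
      linarith
    have : 2 * R ^ 2 / N + 2 * R ^ 2 / N = 4 * R ^ 2 / N := by ring
    linarith
  have hcast : ((N + 1 : ℕ) : ℝ) = (N : ℝ) + 1 := by push_cast; ring
  rw [hcast] at hfin
  linarith [hexp, hexp2, hfin]

/-- Under the uniform bound `∫ Σ_{j≠k} a_kj ≤ nM`, the diagonal
entries of the sampled transition matrix of the consensus flow over
`[t_p, t_{p+1}]` satisfy `φ_kk ≥ e^{-nM}`. -/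
theorem sampled_diagonal_lower_bound
    (n : ℕ) (M tp tp1 : ℝ) (hM : 0 < M) (htp : tp ≤ tp1)
    (a : Fin n → Fin n → ℝ → ℝ)
    (ha_nonneg : ∀ i j t, 0 ≤ a i j t)
    (ha_int : ∀ i j, IntervalIntegrable (a i j) MeasureTheory.volume tp tp1)
    (φ : Matrix (Fin n) (Fin n) ℝ)
    -- φ is the fundamental matrix of the flow over [tp, tp1]
    (hφ : ∀ x : Fin n → ℝ → ℝ, (∀ i, Continuous (x i)) →
      (∀ i τ, τ ∈ Set.Icc tp tp1 →
        x i τ = x i tp + ∫ s in tp..τ, ∑ j, a i j s * (x j s - x i s)) →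
      (fun i => x i tp1) = φ.mulVec (fun i => x i tp))
    (hexists : ∀ v : Fin n → ℝ, ∃ x : Fin n → ℝ → ℝ,
      (∀ i, Continuous (x i)) ∧ (∀ i, x i tp = v i) ∧
      (∀ i τ, τ ∈ Set.Icc tp tp1 →
        x i τ = x i tp + ∫ s in tp..τ, ∑ j, a i j s * (x j s - x i s)))
    (hbound : ∀ k, (∫ t in tp..tp1, ∑ j ∈ Finset.univ.erase k, a k j t) ≤ n * M) :
    ∀ k, Real.exp (-(n * M)) ≤ φ k k := by
  intro k
  -- Row sums of φ are 1 (apply hφ to the constant solution 1).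
  have hones : ∀ i, ∑ j, φ i j = 1 := by
    have h1 := hφ (fun _ _ => 1) (fun _ => continuous_const) (by
      intro i τ hτ
      simp)
    intro i
    have := congrFun h1 i
    simp [Matrix.mulVec, dotProduct] at this
    linarith
  -- The special solution with initial condition 0 at k, 1 elsewhere.
  obtain ⟨x, hxc, hx0, hxe⟩ := hexists (fun j => if j = k then 0 else 1)
  have hxk0 : x k tp = 0 := by simpa using hx0 k
  have hx01 : ∀ i, 0 ≤ x i tp ∧ x i tp ≤ 1 := by
    intro i; rw [hx0 i]; by_cases h : i = k <;> simp [h]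
  -- box bounds
  have hup : ∀ i τ, τ ∈ Set.Icc tp tp1 → x i τ ≤ 1 :=
    consensus_box_upper tp tp1 htp a ha_nonneg ha_int x hxc hxe 1 (fun i => (hx01 i).2)
  have hlo : ∀ i τ, τ ∈ Set.Icc tp tp1 → 0 ≤ x i τ := by
    have hyc : ∀ i, Continuous (fun t => -(x i t)) := fun i => (hxc i).neg
    have hye : ∀ i τ, τ ∈ Set.Icc tp tp1 →
        (fun t => -(x i t)) τ = (fun t => -(x i t)) tp +
          ∫ s in tp..τ, ∑ j, a i j s * ((fun t => -(x j t)) s - (fun t => -(x i t)) s) := by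
      intro i τ hτ
      have hrw : (fun s => ∑ j, a i j s * (-(x j s) - -(x i s)))
          = fun s => -(∑ j, a i j s * (x j s - x i s)) := by
        funext s
        rw [← Finset.sum_neg_distrib]
        exact Finset.sum_congr rfl (fun j _ => by ring)
      simp only
      rw [hrw, intervalIntegral.integral_neg]
      have := hxe i τ hτ
      linarith
    have := consensus_box_upper tp tp1 htp a ha_nonneg ha_int
      (fun i t => -(x i t)) hyc hye 0 (fun i => by simpa using (hx01 i).1)
    intro i τ hτ
    have := this i τ hτ
    simpa using this
  have hbox : ∀ i τ, τ ∈ Set.Icc tp tp1 → x i τ ∈ Set.Icc (0 : ℝ) 1 :=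
    fun i τ hτ => ⟨hlo i τ hτ, hup i τ hτ⟩
  -- Grönwall lower bound
  have hgron := consensus_gronwall_lower tp tp1 htp a ha_nonneg ha_int x hxc hxe hbox k hxk0
  -- identify x k tp1 with the off-diagonal row sum
  have hmv := hφ x hxc hxe
  have hxk1 : x k tp1 = ∑ j ∈ Finset.univ.erase k, φ k j := by
    have := congrFun hmv k
    simp only [Matrix.mulVec, dotProduct] at this
    rw [this, ← Finset.sum_erase_add _ _ (Finset.mem_univ k), hxk0, mul_zero, add_zero]
    refine Finset.sum_congr rfl fun j hj => ?_
    rw [hx0 j, if_neg (Finset.ne_of_mem_erase hj), mul_one]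
  have hdiag : φ k k = 1 - x k tp1 := by
    have h1 := hones k
    rw [← Finset.sum_erase_add _ _ (Finset.mem_univ k)] at h1
    rw [hxk1]; linarith
  rw [hdiag]
  calc Real.exp (-(n * M)) ≤
      Real.exp (-(∫ t in tp..tp1, ∑ j ∈ Finset.univ.erase k, a k j t)) := by
        apply Real.exp_le_exp.2
        simp only [neg_le_neg_iff]
        exact hbound k
    _ ≤ 1 - x k tp1 := hgron
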